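/- Let A ∈ ℝ^{m×q} with Aᵀ b = 0 for a unit vector b, δ > 0, Ω = A Aᵀ + δ I_m, Z = Ψ₁ᵀ A, and Θ = Z Zᵀ + δ I_{m−1}, where Ψ₁ is column-orthonormal with Ψ₁ᵀ b = 0. Then for every integer k ≥ 1: Ψ₁ᵀ Ω^{−k} Ψ₁ = Θ^{−k}, bᵀ Ω^{−k} Ψ₁ = 0, and bᵀ Ω^{−k} b = δ^{−k}. -/

import Mathlib

open Matrix

theorem stmt9 {m q : ℕ} (b : Fin m → ℝ) (hb : b ⬝ᵥ b = 1)
    (Ψ : Matrix (Fin m) (Fin (m - 1)) ℝ)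
    (hΨ : Ψᵀ * Ψ = 1) (hΨb : Ψᵀ.mulVec b = 0)
    (A : Matrix (Fin m) (Fin q) ℝ) (hAb : Aᵀ.mulVec b = 0)
    (δ : ℝ) (hδ : 0 < δ)
    (Ω : Matrix (Fin m) (Fin m) ℝ) (hΩ : Ω = A * Aᵀ + δ • 1)
    (Z : Matrix (Fin (m - 1)) (Fin q) ℝ) (hZ : Z = Ψᵀ * A)
    (Θ : Matrix (Fin (m - 1)) (Fin (m - 1)) ℝ) (hΘ : Θ = Z * Zᵀ + δ • 1) :
    ∀ k : ℕ, 1 ≤ k →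
      Ψᵀ * Ω⁻¹ ^ k * Ψ = Θ⁻¹ ^ k ∧
      Matrix.vecMul b (Ω⁻¹ ^ k * Ψ) = 0 ∧
      b ⬝ᵥ (Ω⁻¹ ^ k).mulVec b = δ⁻¹ ^ k := by
  -- m ≥ 1
  have hm : 1 ≤ m := by
    by_contra h
    push_neg at h
    interval_cases m
    · simp [dotProduct] at hb
  have hm1 : m = (m - 1) + 1 := (Nat.succ_pred_eq_of_pos hm).symm
  -- set B = b bᵀ
  set B : Matrix (Fin m) (Fin m) ℝ := vecMulVec b b with hB
  have hBsplit : B = replicateCol (Fin 1) b * replicateRow (Fin 1) b := vecMulVec_eq (Fin 1) b b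
  have hbΨ : b ᵥ* Ψ = 0 := by rw [← mulVec_transpose]; exact hΨb
  have hbA : b ᵥ* A = 0 := by rw [← mulVec_transpose]; exact hAb
  have hrowcol : replicateRow (Fin 1) b * replicateCol (Fin 1) b = (1 : Matrix (Fin 1) (Fin 1) ℝ) := by
    ext i j
    fin_cases i; fin_cases j
    simp [hb]
  -- completeness: Ψ Ψᵀ + B = 1
  have hUnit : Ψ * Ψᵀ + B = 1 := by
    have e : Fin m ≃ Fin (m - 1) ⊕ Fin 1 :=
      (finCongr hm1).trans (finSumFinEquiv (m := m - 1) (n := 1)).symm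
    have h1 : fromRows Ψᵀ (replicateRow (Fin 1) b) * fromCols Ψ (replicateCol (Fin 1) b) = 1 := by
      rw [fromRows_mul_fromCols]
      have h2 : Ψᵀ * replicateCol (Fin 1) b = 0 := by
        rw [← replicateCol_mulVec, hΨb]
        ext i j; simp
      have h3 : replicateRow (Fin 1) b * Ψ = 0 := by
        rw [← replicateRow_vecMul, hbΨ]
        ext i j; simp
      rw [hΨ, h2, h3, hrowcol, ← fromBlocks_one]
    have h4 : fromCols Ψ (replicateCol (Fin 1) b) * fromRows Ψᵀ (replicateRow (Fin 1) b) = 1 :=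
      (fromCols_mul_fromRows_eq_one_comm e _ _ _ _).mpr h1
    rw [fromCols_mul_fromRows] at h4
    rw [hBsplit]
    exact h4
  -- basic facts about B
  have hΨB : Ψᵀ * B = 0 := by
    rw [hBsplit, ← Matrix.mul_assoc, ← replicateCol_mulVec, hΨb]
    ext i j; simp [mul_apply]
  have hBΨ : B * Ψ = 0 := by
    rw [hBsplit, Matrix.mul_assoc, ← replicateRow_vecMul, hbΨ]
    ext i j; simp [mul_apply]
  have hAB : Aᵀ * B = 0 := by
    rw [hBsplit, ← Matrix.mul_assoc, ← replicateCol_mulVec, hAb]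
    ext i j; simp [mul_apply]
  have hBA : B * A = 0 := by
    rw [hBsplit, Matrix.mul_assoc, ← replicateRow_vecMul, hbA]
    ext i j; simp [mul_apply]
  have hBB : B * B = B := by
    rw [hBsplit, Matrix.mul_assoc, ← Matrix.mul_assoc (replicateRow (Fin 1) b), hrowcol,
      Matrix.one_mul]
  have hBb : B *ᵥ b = b := by
    ext i
    simp only [hB, mulVec, dotProduct, vecMulVec_apply, mul_assoc, ← Finset.mul_sum]
    rw [show ∑ j, b j * b j = b ⬝ᵥ b from rfl, hb, mul_one]
  -- Ψ Ψᵀ A = A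
  have hΨΨA : Ψ * Ψᵀ * A = A := by
    have h : (Ψ * Ψᵀ + B) * A = A := by rw [hUnit, Matrix.one_mul]
    rwa [Matrix.add_mul, hBA, add_zero] at h
  -- Θ is positive definite, hence invertible
  have hZZ : (Z * Zᵀ).PosSemidef := by
    have h := posSemidef_self_mul_conjTranspose Z
    have hct : Zᴴ = Zᵀ := by ext i j; simp [conjTranspose_apply]
    rwa [hct] at h
  have hδ1 : (δ • (1 : Matrix (Fin (m - 1)) (Fin (m - 1)) ℝ)).PosDef := by
    rw [smul_one_eq_diagonal]
    exact Matrix.PosDef.diagonal fun _ => hδ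
  have hΘpd : Θ.PosDef := hΘ ▸ Matrix.PosDef.posSemidef_add hZZ hδ1
  have hΘinv : Θ * Θ⁻¹ = 1 := mul_nonsing_inv _ (isUnit_iff_isUnit_det _ |>.mp hΘpd.isUnit)
  -- Ω Ψ = Ψ Θ
  have hΩΨ : Ω * Ψ = Ψ * Θ := by
    rw [hΩ, hΘ, hZ, Matrix.add_mul, Matrix.mul_add, Matrix.smul_mul, Matrix.one_mul,
      Matrix.mul_smul]
    congr 1
    rw [transpose_mul, transpose_transpose, ← Matrix.mul_assoc Ψ (Ψᵀ * A) (Aᵀ * Ψ),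
      ← Matrix.mul_assoc Ψ Ψᵀ A, hΨΨA, Matrix.mul_assoc]
    rw [Matrix.mul_one]
  -- Ω B = δ B
  have hΩB : Ω * B = δ • B := by
    rw [hΩ, Matrix.add_mul, Matrix.smul_mul, Matrix.one_mul, Matrix.mul_assoc, hAB,
      Matrix.mul_zero, zero_add]
  -- the explicit inverse
  set W : Matrix (Fin m) (Fin m) ℝ := Ψ * Θ⁻¹ * Ψᵀ + δ⁻¹ • B with hW
  have hΩW : Ω * W = 1 := by
    rw [hW, Matrix.mul_add, Matrix.mul_smul, ← Matrix.mul_assoc, ← Matrix.mul_assoc, hΩΨ,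
      Matrix.mul_assoc Ψ Θ, hΘinv, Matrix.mul_one, hΩB, smul_smul,
      inv_mul_cancel₀ hδ.ne', one_smul, hUnit]
  have hΩinv : Ω⁻¹ = W := inv_eq_right_inv hΩW
  -- powers of W
  have hWk : ∀ k : ℕ, W ^ k = Ψ * Θ⁻¹ ^ k * Ψᵀ + (δ⁻¹ ^ k) • B := by
    intro k
    induction k with
    | zero => simpa using hUnit.symm
    | succ n ih =>
      rw [pow_succ, ih, hW, Matrix.add_mul, Matrix.mul_add, Matrix.mul_add, add_assoc]
      congr 1
      · rw [Matrix.mul_assoc (Ψ * Θ⁻¹ ^ n) Ψᵀ, Matrix.mul_assoc Ψ Θ⁻¹ Ψᵀ,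
          ← Matrix.mul_assoc Ψᵀ Ψ, hΨ, Matrix.one_mul,
          ← Matrix.mul_assoc (Ψ * Θ⁻¹ ^ n) Θ⁻¹ Ψᵀ, Matrix.mul_assoc Ψ (Θ⁻¹ ^ n) Θ⁻¹,
          ← pow_succ]
      · rw [Matrix.mul_smul, Matrix.mul_assoc, hΨB, Matrix.mul_zero, smul_zero, zero_add,
          Matrix.smul_mul, Matrix.smul_mul, ← Matrix.mul_assoc B (Ψ * Θ⁻¹) Ψᵀ,
          ← Matrix.mul_assoc B Ψ Θ⁻¹, hBΨ,
          Matrix.zero_mul, Matrix.zero_mul, smul_zero, zero_add, Matrix.mul_smul, hBB,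
          smul_smul, ← pow_succ]
  -- conclude
  intro k _
  rw [hΩinv, hWk k]
  have hWΨ : (Ψ * Θ⁻¹ ^ k * Ψᵀ + δ⁻¹ ^ k • B) * Ψ = Ψ * Θ⁻¹ ^ k := by
    rw [Matrix.add_mul, Matrix.mul_assoc _ Ψᵀ Ψ, hΨ, Matrix.mul_one, Matrix.smul_mul, hBΨ,
      smul_zero, add_zero]
  refine ⟨?_, ?_, ?_⟩
  · rw [Matrix.mul_assoc, hWΨ, ← Matrix.mul_assoc, hΨ, Matrix.one_mul]
  · rw [hWΨ, ← vecMul_vecMul, hbΨ, zero_vecMul]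
  · rw [add_mulVec, dotProduct_add, smul_mulVec, hBb, Matrix.mul_assoc,
      ← mulVec_mulVec, ← mulVec_mulVec, hΨb, mulVec_zero, mulVec_zero, dotProduct_zero,
      zero_add, dotProduct_smul, hb, smul_eq_mul, mul_one]
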